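/- Let n be a natural number and let x, y ∈ ℝⁿ. There exists a monotone (componentwise non-decreasing) map γ : [0,1] → ℝⁿ, continuous for the standard topologies, with γ(0) = x and γ(1) = y, if and only if there exists a map δ : [0,1] → ℝⁿ with δ(0) = x and δ(1) = y that is continuous when [0,1] carries the subspace lower topology and ℝⁿ carries the product of n copies of the lower topology on ℝ. (The reachability relation by directed paths in ⃗ℝⁿ equals the reachability relation by irreversible paths in ir-ℝⁿ.) -/

import Mathlib

/-- The lower (left order) topology on ℝ, generated by the open rays (−∞, a)
(equivalently, by the complements of the closed upper rays [a, ∞)). -/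
def lowerTopR : TopologicalSpace ℝ :=
  TopologicalSpace.generateFrom {s : Set ℝ | ∃ a : ℝ, s = Set.Iio a}

/-- ir-I : the unit interval [0,1] with the subspace topology inherited from
the lower topology on ℝ. -/
def irI : TopologicalSpace unitInterval :=
  lowerTopR.induced Subtype.val

/-- ir-ℝⁿ : ℝⁿ with the product topology of n copies of the lower topology on ℝ. -/
def irRn (n : ℕ) : TopologicalSpace (Fin n → ℝ) :=
  @Pi.topologicalSpace (Fin n) (fun _ => ℝ) (fun _ => lowerTopR)

lemma lower_isLowerSet {s : Set ℝ} (hs : @IsOpen ℝ lowerTopR s) : IsLowerSet s := by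
  induction hs with
  | basic u hu => obtain ⟨a, rfl⟩ := hu; exact isLowerSet_Iio a
  | univ => exact isLowerSet_univ
  | inter u v _ _ hu hv => exact hu.inter hv
  | sUnion S _ hS => exact isLowerSet_sUnion hS

lemma irRn_isLowerSet {n : ℕ} {s : Set (Fin n → ℝ)} (hs : @IsOpen _ (irRn n) s) :
    IsLowerSet s := by
  rw [show irRn n = _ from @pi_eq_generateFrom (Fin n) (fun _ => ℝ) (fun _ => lowerTopR)] at hs
  induction hs with
  | basic u hu =>
      obtain ⟨t, F, ht, rfl⟩ := hu
      intro f g hgf hf i hi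
      exact lower_isLowerSet (ht i hi) (hgf i) (hf i hi)
  | univ => exact isLowerSet_univ
  | inter u v _ _ hu hv => exact hu.inter hv
  | sUnion S _ hS => exact isLowerSet_sUnion hS

lemma irI_isOpen_of_lower {W : Set ℝ} (hW : @IsOpen ℝ lowerTopR W) :
    @IsOpen _ irI (Subtype.val ⁻¹' W) := ⟨W, hW, rfl⟩

/-- There is a d-path from x to y in ⃗ℝⁿ iff there is an ir-path from x to y
in ir-ℝⁿ. -/
theorem stmt_1 (n : ℕ) (x y : Fin n → ℝ) :
    (∃ γ : unitInterval → (Fin n → ℝ),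
        Monotone γ ∧ Continuous γ ∧ γ 0 = x ∧ γ 1 = y) ↔
    (∃ δ : unitInterval → (Fin n → ℝ),
        @Continuous _ _ irI (irRn n) δ ∧ δ 0 = x ∧ δ 1 = y) := by
  constructor
  · rintro ⟨γ, hmono, -, h0, h1⟩
    have hxy : x ≤ y := by
      rw [← h0, ← h1]
      exact hmono (by exact_mod_cast zero_le_one : (0 : unitInterval) ≤ 1)
    refine ⟨fun t => if t = 1 then y else x, ?_, by simp, by simp⟩
    rw [@continuous_def _ _ irI (irRn n)]
    intro V hV
    have hVl := irRn_isLowerSet hV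
    by_cases hxV : x ∈ V
    · by_cases hyV : y ∈ V
      · have : (fun t : unitInterval => if t = 1 then y else x) ⁻¹' V = Set.univ := by
          ext t; by_cases ht : t = 1 <;> simp [ht, hxV, hyV]
        rw [this]; exact @isOpen_univ _ irI
      · have : (fun t : unitInterval => if t = 1 then y else x) ⁻¹' V
            = Subtype.val ⁻¹' Set.Iio 1 := by
          ext t
          by_cases ht : t = 1
          · simp [ht, hyV]
          · have h1 : (t : ℝ) < 1 := lt_of_le_of_ne t.2.2 (fun h => ht (Subtype.ext h))
            simp [ht, hxV, h1]
        rw [this]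
        exact irI_isOpen_of_lower (TopologicalSpace.GenerateOpen.basic _ ⟨1, rfl⟩)
    · have : (fun t : unitInterval => if t = 1 then y else x) ⁻¹' V = ∅ := by
        ext t
        by_cases ht : t = 1
        · simp only [ht, if_pos rfl, Set.mem_preimage, Set.mem_empty_iff_false, iff_false]
          exact fun hy => hxV (hVl hxy hy)
        · simp [ht, hxV]
      rw [this]; exact @isOpen_empty _ irI
  · rintro ⟨δ, hδ, h0, h1⟩
    have hxy : x ≤ y := by
      intro i
      by_contra h
      push_neg at h
      have hIio : @IsOpen ℝ lowerTopR (Set.Iio (x i)) :=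
        TopologicalSpace.GenerateOpen.basic _ ⟨x i, rfl⟩
      have heval : @Continuous _ _ (irRn n) lowerTopR (fun f : Fin n → ℝ => f i) :=
        @continuous_apply (Fin n) (fun _ => ℝ) (fun _ => lowerTopR) i
      have hcomp : @Continuous _ _ irI lowerTopR (fun t => δ t i) :=
        @Continuous.comp _ _ _ irI (irRn n) lowerTopR _ _ heval hδ
      have hU : @IsOpen _ irI (δ ⁻¹' ((fun f : Fin n → ℝ => f i) ⁻¹' Set.Iio (x i))) :=
        @Continuous.isOpen_preimage _ _ irI lowerTopR _ hcomp _ hIio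
      obtain ⟨W, hW, hWU⟩ := hU
      have h1W : (1 : ℝ) ∈ W := by
        have : (1 : unitInterval) ∈ Subtype.val ⁻¹' W := by
          rw [hWU]; simp only [Set.mem_preimage, h1]; exact h
        exact this
      have h0W : (0 : ℝ) ∈ W := lower_isLowerSet hW zero_le_one h1W
      have : (0 : unitInterval) ∈ Subtype.val ⁻¹' W := h0W
      rw [hWU] at this
      simp only [Set.mem_preimage, h0, Set.mem_Iio] at this
      exact lt_irrefl _ this
    refine ⟨fun t i => x i + (t : ℝ) * (y i - x i), ?_, ?_, ?_, ?_⟩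
    · intro s t hst i
      exact add_le_add_right
        (mul_le_mul_of_nonneg_right (Subtype.coe_le_coe.mpr hst) (sub_nonneg.2 (hxy i))) _
    · exact continuous_pi fun i =>
        continuous_const.add (continuous_subtype_val.mul continuous_const)
    · funext i; simp
    · funext i; simp
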